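/- Let a ∈ H^s(𝕋²) with s > 1 + d/2 where d = 2, and let ⟨∇⟩^s be the Bessel potential operator. Then the commutator satisfies ‖[a, ⟨∇⟩^s]u‖_{L²(𝕋²)} ≤ C‖a‖_{H^s}‖u‖_{H^{s−1}} for all u ∈ H^{s−1}(𝕋²). -/

import Mathlib

open scoped ENNReal
open MeasureTheory

noncomputable section

set_option maxHeartbeats 1000000

def zsq (ξ : Fin 2 → ℤ) : ℝ := ∑ i, ((ξ i : ℝ))^2

/-- Sobolev weight `⟨ξ⟩^{2s} = (1+|ξ|²)^s` -/
def wgt (s : ℝ) (ξ : Fin 2 → ℤ) : ℝ := (1 + zsq ξ) ^ s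

/-- Sobolev norm `‖·‖_{H^s(𝕋²)}` on the Fourier side -/
def sobNorm (s : ℝ) (c : (Fin 2 → ℤ) → ℂ) : ℝ :=
  Real.sqrt (∑' ξ, wgt s ξ * ‖c ξ‖^2)

/-- Fourier coefficients of the commutator `[a, ⟨∇⟩^s]u`, where `α`, `υ` are the
Fourier coefficients of `a` and `u`: the `ξ`-th coefficient is
`∑_η α(ξ−η) û(η) (⟨η⟩^s − ⟨ξ⟩^s)`. -/
def commCoef (s : ℝ) (α υ : (Fin 2 → ℤ) → ℂ) (ξ : Fin 2 → ℤ) : ℂ :=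
  ∑' η, α (ξ - η) * υ η
    * ((((1 + zsq η) ^ (s/2) : ℝ) : ℂ) - (((1 + zsq ξ) ^ (s/2) : ℝ) : ℂ))

abbrev G := Fin 2 → ℤ



lemma bern {x y p : ℝ} (hy : 1 ≤ y) (hxy : y ≤ x) (hp : 1 ≤ p) :
    x ^ p - y ^ p ≤ p * (x - y) * x ^ (p - 1) := by
  have hx : (0:ℝ) < x := lt_of_lt_of_le one_pos (hy.trans hxy)
  have hy0 : (0:ℝ) < y := lt_of_lt_of_le one_pos hy
  have h1 : (-1:ℝ) ≤ y / x - 1 := by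
    have : (0:ℝ) ≤ y / x := div_nonneg hy0.le hx.le
    linarith
  have hb := one_add_mul_self_le_rpow_one_add h1 hp
  rw [add_sub_cancel] at hb
  have hxp : (0:ℝ) < x ^ p := Real.rpow_pos_of_pos hx p
  have hyx : (y / x) ^ p * x ^ p = y ^ p := by
    rw [← Real.mul_rpow (div_nonneg hy0.le hx.le) hx.le, div_mul_cancel₀ _ hx.ne']
  have h2 := mul_le_mul_of_nonneg_right hb hxp.le
  rw [hyx] at h2
  have hxx : x ^ p = x ^ (p - 1) * x := by
    rw [← Real.rpow_add_one hx.ne' (p - 1)]; ring_nf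
  have key : x ^ p - y ^ p ≤ p * (1 - y / x) * x ^ p := by linarith
  calc x ^ p - y ^ p ≤ p * (1 - y / x) * x ^ p := key
    _ = p * (x - y) * x ^ (p - 1) := by
        rw [hxx]; field_simp

lemma bern_abs {x y p : ℝ} (hx : 1 ≤ x) (hy : 1 ≤ y) (hp : 1 ≤ p) :
    |x ^ p - y ^ p| ≤ p * |x - y| * (max x y) ^ (p - 1) := by
  rcases le_total y x with h | h
  · rw [abs_of_nonneg (by linarith [bern hy h hp, Real.rpow_le_rpow (by positivity) h (by positivity : (0:ℝ) ≤ p)] : (0:ℝ) ≤ x ^ p - y ^ p), abs_of_nonneg (by linarith), max_eq_left h]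
    exact bern hy h hp
  · rw [abs_sub_comm, abs_sub_comm x y,
      abs_of_nonneg (by linarith [Real.rpow_le_rpow (by positivity) h (by positivity : (0:ℝ) ≤ p)] : (0:ℝ) ≤ y ^ p - x ^ p), abs_of_nonneg (by linarith), max_eq_right h]
    exact bern hx h hp





def vv (ξ : G) : EuclideanSpace ℝ (Fin 2) := WithLp.toLp 2 (fun i => (ξ i : ℝ))

lemma zsq_eq (ξ : G) : zsq ξ = ‖vv ξ‖ ^ 2 := by
  rw [EuclideanSpace.norm_eq, Real.sq_sqrt (by positivity)]
  simp [zsq, vv, sq_abs]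

lemma vv_sub (ξ η : G) : vv (ξ - η) = vv ξ - vv η := by
  ext i; simp [vv]

lemma zsq_nonneg (ξ : G) : 0 ≤ zsq ξ := by rw [zsq_eq]; positivity

lemma zsq_diff_le (ξ η : G) :
    |zsq ξ - zsq η| ≤ (‖vv ξ‖ + ‖vv η‖) * ‖vv (ξ - η)‖ := by
  rw [zsq_eq, zsq_eq]
  have h : ‖vv ξ‖^2 - ‖vv η‖^2 = (‖vv ξ‖ + ‖vv η‖) * (‖vv ξ‖ - ‖vv η‖) := by ring
  rw [h, abs_mul, abs_of_nonneg (by positivity)]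
  refine mul_le_mul_of_nonneg_left ?_ (by positivity)
  rw [vv_sub]
  exact abs_norm_sub_norm_le _ _

lemma norm_vv_le (ξ η : G) : ‖vv ξ‖ ≤ ‖vv (ξ - η)‖ + ‖vv η‖ := by
  calc ‖vv ξ‖ = ‖vv (ξ - η) + vv η‖ := by rw [vv_sub, sub_add_cancel]
    _ ≤ _ := norm_add_le _ _

lemma one_le_q (ξ : G) : (1:ℝ) ≤ 1 + zsq ξ := by linarith [zsq_nonneg ξ]

lemma key {s : ℝ} (hs : 2 < s) (ξ η : G) :
    |(1 + zsq ξ) ^ (s/2) - (1 + zsq η) ^ (s/2)| ≤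
      (3*(s/2)*4^(s/2-1)) *
        ((1 + zsq (ξ - η)) ^ (s/2)
          + (1 + zsq (ξ - η)) ^ ((1:ℝ)/2) * (1 + zsq η) ^ ((s-1)/2)) := by
  have hp : (1:ℝ) ≤ s/2 := by linarith
  set p := s/2 with hpdef
  set X := ‖vv ξ‖ with hX
  set N := ‖vv η‖ with hN
  set D := ‖vv (ξ - η)‖ with hD
  have hX0 : 0 ≤ X := norm_nonneg _
  have hN0 : 0 ≤ N := norm_nonneg _
  have hD0 : 0 ≤ D := norm_nonneg _
  have hxq : 1 + zsq ξ = 1 + X^2 := by rw [zsq_eq]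
  have hyq : 1 + zsq η = 1 + N^2 := by rw [zsq_eq]
  have hzq : 1 + zsq (ξ - η) = 1 + D^2 := by rw [zsq_eq]
  have hx1 : (1:ℝ) ≤ 1 + zsq ξ := one_le_q ξ
  have hy1 : (1:ℝ) ≤ 1 + zsq η := one_le_q η
  have hz1 : (1:ℝ) ≤ 1 + zsq (ξ - η) := one_le_q (ξ - η)
  have h0 := bern_abs hx1 hy1 hp
  have h1 : |(1 + zsq ξ) - (1 + zsq η)| ≤ (X + N) * D := by
    have := zsq_diff_le ξ η
    simpa using this
  have hXDN : X ≤ D + N := norm_vv_le ξ η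
  have sqrt_le : ∀ (a b : ℝ), 0 ≤ a → a^2 ≤ b → a ≤ b ^ ((1:ℝ)/2) := by
    intro a b ha hab
    rw [← Real.sqrt_eq_rpow]
    calc a = Real.sqrt (a^2) := (Real.sqrt_sq ha).symm
      _ ≤ Real.sqrt b := Real.sqrt_le_sqrt hab
  have hNy : N ≤ (1 + zsq η) ^ ((1:ℝ)/2) := sqrt_le N _ hN0 (by rw [hyq]; linarith)
  have hDz : D ≤ (1 + zsq (ξ - η)) ^ ((1:ℝ)/2) := sqrt_le D _ hD0 (by rw [hzq]; linarith)
  set Y2 := (1 + zsq η) ^ ((1:ℝ)/2) with hY2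
  set Z2 := (1 + zsq (ξ - η)) ^ ((1:ℝ)/2) with hZ2
  have hY20 : 0 ≤ Y2 := Real.rpow_nonneg (by linarith) _
  have hZ20 : 0 ≤ Z2 := Real.rpow_nonneg (by linarith) _
  have hp0 : (0:ℝ) < p := by linarith
  have hfour : (0:ℝ) ≤ 4 ^ (p-1) := Real.rpow_nonneg (by norm_num) _
  have hZp0 : (0:ℝ) ≤ (1 + zsq (ξ - η)) ^ p := Real.rpow_nonneg (by linarith) _
  have hYs0 : (0:ℝ) ≤ (1 + zsq η) ^ ((s-1)/2) := Real.rpow_nonneg (by linarith) _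
  rcases le_total D N with hc | hc
  · -- D ≤ N : use the second term
    have hmax : max (1 + zsq ξ) (1 + zsq η) ≤ 4 * (1 + zsq η) := by
      rw [max_le_iff]
      constructor
      · rw [hxq, hyq]; nlinarith
      · linarith
    have h4 : (max (1 + zsq ξ) (1 + zsq η)) ^ (p-1) ≤ 4^(p-1) * (1 + zsq η)^(p-1) := by
      calc (max (1 + zsq ξ) (1 + zsq η)) ^ (p-1)
          ≤ (4 * (1 + zsq η)) ^ (p-1) :=
            Real.rpow_le_rpow (by positivity) hmax (by linarith)
        _ = 4^(p-1) * (1 + zsq η)^(p-1) := Real.mul_rpow (by norm_num) (by linarith)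
    have hXN : X + N ≤ 3 * Y2 := by
      have : X ≤ 2*N := by linarith
      have hN2 : N ≤ Y2 := hNy
      linarith
    have hmerge : Y2 * (1 + zsq η)^(p-1) = (1 + zsq η) ^ ((s-1)/2) := by
      rw [hY2, ← Real.rpow_add (by linarith : (0:ℝ) < 1 + zsq η)]
      congr 1
      rw [hpdef]; ring
    calc |(1 + zsq ξ) ^ p - (1 + zsq η) ^ p|
        ≤ p * |(1 + zsq ξ) - (1 + zsq η)| * (max (1 + zsq ξ) (1 + zsq η)) ^ (p-1) := h0
      _ ≤ p * ((3*Y2) * Z2) * (4^(p-1) * (1 + zsq η)^(p-1)) := by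
          apply mul_le_mul _ h4 (by positivity) (by positivity)
          apply mul_le_mul_of_nonneg_left _ (by linarith)
          calc |(1 + zsq ξ) - (1 + zsq η)| ≤ (X + N) * D := h1
            _ ≤ (3*Y2) * Z2 := mul_le_mul hXN hDz hD0 (by positivity)
      _ = (3*p*4^(p-1)) * (Z2 * (Y2 * (1 + zsq η)^(p-1))) := by ring
      _ = (3*p*4^(p-1)) * (Z2 * (1 + zsq η) ^ ((s-1)/2)) := by rw [hmerge]
      _ ≤ (3*p*4^(p-1)) * ((1 + zsq (ξ - η)) ^ p + Z2 * (1 + zsq η) ^ ((s-1)/2)) := by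
          have hC : (0:ℝ) ≤ 3*p*4^(p-1) := by positivity
          nlinarith [mul_nonneg hC hZp0]
  · -- N ≤ D : use the first term
    have hmax : max (1 + zsq ξ) (1 + zsq η) ≤ 4 * (1 + zsq (ξ - η)) := by
      rw [max_le_iff]
      constructor
      · rw [hxq, hzq]; nlinarith
      · rw [hyq, hzq]; nlinarith
    have h4 : (max (1 + zsq ξ) (1 + zsq η)) ^ (p-1) ≤ 4^(p-1) * (1 + zsq (ξ - η))^(p-1) := by
      calc (max (1 + zsq ξ) (1 + zsq η)) ^ (p-1)
          ≤ (4 * (1 + zsq (ξ - η))) ^ (p-1) :=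
            Real.rpow_le_rpow (by positivity) hmax (by linarith)
        _ = _ := Real.mul_rpow (by norm_num) (by linarith)
    have hXN : X + N ≤ 3 * Z2 := by
      have : X ≤ 2*D := by linarith
      have : N ≤ Z2 := le_trans hc hDz
      linarith [hDz]
    have hmerge : Z2 * Z2 * (1 + zsq (ξ - η))^(p-1) = (1 + zsq (ξ - η)) ^ p := by
      rw [hZ2, ← Real.rpow_add (by linarith : (0:ℝ) < 1 + zsq (ξ - η)),
        ← Real.rpow_add (by linarith : (0:ℝ) < 1 + zsq (ξ - η))]
      norm_num
    calc |(1 + zsq ξ) ^ p - (1 + zsq η) ^ p|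
        ≤ p * |(1 + zsq ξ) - (1 + zsq η)| * (max (1 + zsq ξ) (1 + zsq η)) ^ (p-1) := h0
      _ ≤ p * ((3*Z2) * Z2) * (4^(p-1) * (1 + zsq (ξ - η))^(p-1)) := by
          apply mul_le_mul _ h4 (by positivity) (by positivity)
          apply mul_le_mul_of_nonneg_left _ (by linarith)
          calc |(1 + zsq ξ) - (1 + zsq η)| ≤ (X + N) * D := h1
            _ ≤ (3*Z2) * Z2 := mul_le_mul hXN hDz hD0 (by positivity)
      _ = (3*p*4^(p-1)) * (Z2 * Z2 * (1 + zsq (ξ - η))^(p-1)) := by ring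
      _ = (3*p*4^(p-1)) * ((1 + zsq (ξ - η)) ^ p) := by rw [hmerge]
      _ ≤ _ := by
          have hC : (0:ℝ) ≤ 3*p*4^(p-1) := by positivity
          nlinarith [mul_nonneg hC (mul_nonneg hZ20 hYs0)]


lemma ecs (a b : G → ℝ≥0∞) :
    (∑' i, a i * b i)^2 ≤ (∑' i, (a i)^2) * (∑' i, (b i)^2) := by
  have hconj : Real.HolderConjugate 2 2 := by
    exact Real.HolderConjugate.two_two
  have h := ENNReal.lintegral_mul_le_Lp_mul_Lq (Measure.count : Measure G) hconj
    (measurable_of_countable a).aemeasurable (measurable_of_countable b).aemeasurable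
  simp only [Pi.mul_apply, lintegral_count] at h
  rw [show ((2:ℝ)) = ((2:ℕ):ℝ) by norm_num] at h
  simp only [ENNReal.rpow_natCast] at h
  calc (∑' i, a i * b i)^2
      ≤ ((∑' i, (a i)^2) ^ ((1:ℝ)/2) * (∑' i, (b i)^2) ^ ((1:ℝ)/2))^2 := by
        gcongr
        exact h
    _ = (∑' i, (a i)^2) * (∑' i, (b i)^2) := by
        rw [mul_pow, ← ENNReal.rpow_natCast (_ ^ ((1:ℝ)/2)) 2, ← ENNReal.rpow_natCast (_ ^ ((1:ℝ)/2)) 2,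
          ← ENNReal.rpow_mul, ← ENNReal.rpow_mul]
        norm_num

lemma half_mul_self (w : ℝ≥0∞) : w ^ ((1:ℝ)/2) * w ^ ((1:ℝ)/2) = w := by
  rw [← ENNReal.rpow_add_of_nonneg _ _ (by norm_num) (by norm_num)]
  norm_num

lemma ecs_w (w g : G → ℝ≥0∞) :
    (∑' i, w i * g i)^2 ≤ (∑' i, w i) * (∑' i, w i * (g i)^2) := by
  have half_sq : ∀ w : ℝ≥0∞, (w ^ ((1:ℝ)/2))^2 = w := by
    intro w; rw [sq, half_mul_self]
  have h := ecs (fun i => (w i) ^ ((1:ℝ)/2)) (fun i => (w i) ^ ((1:ℝ)/2) * g i)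
  simp only [← mul_assoc, half_mul_self, mul_pow, half_sq] at h
  exact h

lemma tsum_sub_left (f : G → ℝ≥0∞) (ξ : G) : ∑' η, f (ξ - η) = ∑' ζ, f ζ :=
  (Equiv.subLeft ξ).tsum_eq f

lemma young (f g : G → ℝ≥0∞) :
    ∑' ξ, (∑' η, f (ξ - η) * g η)^2 ≤ (∑' ζ, f ζ)^2 * ∑' η, (g η)^2 := by
  set S := ∑' ζ, f ζ with hS
  have step1 : ∀ ξ, (∑' η, f (ξ - η) * g η)^2 ≤ S * ∑' η, f (ξ - η) * (g η)^2 := by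
    intro ξ
    calc (∑' η, f (ξ - η) * g η)^2
        ≤ (∑' η, f (ξ - η)) * (∑' η, f (ξ - η) * (g η)^2) := ecs_w _ _
      _ = S * ∑' η, f (ξ - η) * (g η)^2 := by rw [tsum_sub_left]
  calc ∑' ξ, (∑' η, f (ξ - η) * g η)^2
      ≤ ∑' ξ, S * ∑' η, f (ξ - η) * (g η)^2 := ENNReal.tsum_le_tsum step1
    _ = S * ∑' ξ, ∑' η, f (ξ - η) * (g η)^2 := ENNReal.tsum_mul_left
    _ = S * ∑' η, ∑' ξ, f (ξ - η) * (g η)^2 := by rw [ENNReal.tsum_comm]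
    _ = S * ∑' η, (g η)^2 * ∑' ξ, f (ξ - η) := by
        congr 1; apply tsum_congr; intro η
        rw [← ENNReal.tsum_mul_left]
        apply tsum_congr; intro ξ; ring
    _ = S * ∑' η, (g η)^2 * S := by
        congr 1; apply tsum_congr; intro η
        congr 1
        exact (Equiv.subRight η).tsum_eq f
    _ = S^2 * ∑' η, (g η)^2 := by
        rw [ENNReal.tsum_mul_right]; ring


lemma oneD {r : ℝ} (hr : r < -(1/2)) :
    Summable fun n : ℤ => (1 + (n:ℝ)^2) ^ r := by
  have hb : 1 < -(2*r) := by linarith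
  have h1 : Summable fun n : ℤ => |(n:ℝ)| ^ (2*r) := by
    have := Real.summable_abs_int_rpow hb
    simpa using this
  have h2 : Summable fun n : ℤ => if n = 0 then (1:ℝ) else 0 :=
    summable_of_ne_finset_zero (s := {0}) (by intro n hn; simp at hn; simp [hn])
  refine Summable.of_nonneg_of_le (fun n => Real.rpow_nonneg (by positivity) _)
    (fun n => ?_) (h1.add h2)
  by_cases hn : n = 0
  · subst hn
    rw [show ((0:ℤ):ℝ) = 0 by norm_num]
    rw [abs_zero, Real.zero_rpow (by linarith : 2*r ≠ 0)]
    norm_num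
  · have hn0 : (0:ℝ) < (n:ℝ)^2 := by
      have : (n:ℝ) ≠ 0 := Int.cast_ne_zero.mpr hn
      positivity
    have : (1 + (n:ℝ)^2) ^ r ≤ ((n:ℝ)^2) ^ r := by
      apply Real.rpow_le_rpow_of_nonpos hn0 (by linarith) (by linarith)
    have e : ((n:ℝ)^2) ^ r = |(n:ℝ)| ^ (2*r) := by
      rw [← sq_abs, ← Real.rpow_natCast |(n:ℝ)| 2, ← Real.rpow_mul (abs_nonneg _)]
      norm_num
    simp only [hn, if_false, add_zero]
    rw [← e]; exact this

lemma twoD {r : ℝ} (hr : r < -1) : Summable fun ξ : G => (1 + zsq ξ) ^ r := by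
  have hhalf : r/2 < -(1/2) := by linarith
  have h1 := oneD hhalf
  have hprod : Summable fun x : ℤ × ℤ =>
      ((1 + (x.1:ℝ)^2) ^ (r/2)) * ((1 + (x.2:ℝ)^2) ^ (r/2)) :=
    h1.mul_of_nonneg h1 (fun n => Real.rpow_nonneg (by positivity) _)
      (fun n => Real.rpow_nonneg (by positivity) _)
  have hG : Summable fun ξ : G =>
      ((1 + ((ξ 0 : ℤ):ℝ)^2) ^ (r/2)) * ((1 + ((ξ 1 : ℤ):ℝ)^2) ^ (r/2)) := by
    have := (Equiv.summable_iff (piFinTwoEquiv fun _ => ℤ)).mpr hprod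
    exact this
  refine Summable.of_nonneg_of_le (fun ξ => Real.rpow_nonneg (by unfold zsq; positivity) _)
    (fun ξ => ?_) hG
  set a := ((ξ 0 : ℤ):ℝ) with ha
  set b := ((ξ 1 : ℤ):ℝ) with hb
  have hz : zsq ξ = a^2 + b^2 := by
    simp [zsq, Fin.sum_univ_two]; rfl
  have hq1 : (1:ℝ) ≤ 1 + zsq ξ := by rw [hz]; nlinarith [sq_nonneg a, sq_nonneg b]
  have key : (1 + a^2) * (1 + b^2) ≤ (1 + zsq ξ)^2 := by
    rw [hz]; nlinarith [sq_nonneg a, sq_nonneg b, sq_nonneg (a*b)]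
  calc (1 + zsq ξ) ^ r = (((1 + zsq ξ)^(2:ℕ)) : ℝ) ^ (r/2) := by
        rw [← Real.rpow_natCast (1 + zsq ξ) 2, ← Real.rpow_mul (by linarith)]
        congr 1; ring
    _ ≤ ((1 + a^2) * (1 + b^2)) ^ (r/2) := by
        apply Real.rpow_le_rpow_of_nonpos (by positivity) key (by linarith)
    _ = (1 + a^2) ^ (r/2) * (1 + b^2) ^ (r/2) := Real.mul_rpow (by positivity) (by positivity)

lemma q_pos (ξ : G) : (0:ℝ) < 1 + zsq ξ := lt_of_lt_of_le one_pos (one_le_q ξ)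

def Cs (s : ℝ) : ℝ := 3*(s/2)*4^(s/2-1)

lemma Cs_pos {s : ℝ} (hs : 2 < s) : 0 < Cs s := by
  have : (0:ℝ) < 4^(s/2-1) := Real.rpow_pos_of_pos (by norm_num) _
  have hl : (0:ℝ) < s/2 := by linarith
  unfold Cs; positivity

lemma term_bound {s : ℝ} (hs : 2 < s) (α υ : G → ℂ) (ξ η : G) :
    ‖α (ξ - η) * υ η * ((((1 + zsq η) ^ (s/2) : ℝ) : ℂ) - (((1 + zsq ξ) ^ (s/2) : ℝ) : ℂ))‖ ≤
      Cs s * ( ((1+zsq (ξ-η))^(s/2) * ‖α (ξ-η)‖)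
                  * ((1+zsq η)^((1-s)/2) * ((1+zsq η)^((s-1)/2) * ‖υ η‖))
             + (((1+zsq (ξ-η))^(s/2) * ‖α (ξ-η)‖) * (1+zsq (ξ-η))^((1-s)/2))
                  * ((1+zsq η)^((s-1)/2) * ‖υ η‖) ) := by
  have hnorm : ‖((((1 + zsq η) ^ (s/2) : ℝ) : ℂ) - (((1 + zsq ξ) ^ (s/2) : ℝ) : ℂ))‖
      = |(1 + zsq η) ^ (s/2) - (1 + zsq ξ) ^ (s/2)| := by
    rw [← Complex.ofReal_sub, Complex.norm_real, Real.norm_eq_abs]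
  rw [norm_mul, norm_mul, hnorm]
  have hk : |(1 + zsq η) ^ (s/2) - (1 + zsq ξ) ^ (s/2)| ≤
      Cs s * ((1 + zsq (ξ - η)) ^ (s/2)
          + (1 + zsq (ξ - η)) ^ ((1:ℝ)/2) * (1 + zsq η) ^ ((s-1)/2)) := by
    rw [abs_sub_comm]; exact key hs ξ η
  have hid1 : (1+zsq η)^((1-s)/2) * (1+zsq η)^((s-1)/2) = 1 := by
    rw [← Real.rpow_add (q_pos η), show (1-s)/2 + (s-1)/2 = 0 by ring, Real.rpow_zero]
  have hid2 : (1+zsq (ξ-η))^(s/2) * (1+zsq (ξ-η))^((1-s)/2) = (1+zsq (ξ-η))^((1:ℝ)/2) := by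
    rw [← Real.rpow_add (q_pos (ξ-η))]
    congr 1; ring
  calc ‖α (ξ - η)‖ * ‖υ η‖ * |(1 + zsq η) ^ (s/2) - (1 + zsq ξ) ^ (s/2)|
      ≤ ‖α (ξ - η)‖ * ‖υ η‖ * (Cs s * ((1 + zsq (ξ - η)) ^ (s/2)
          + (1 + zsq (ξ - η)) ^ ((1:ℝ)/2) * (1 + zsq η) ^ ((s-1)/2))) :=
        mul_le_mul_of_nonneg_left hk (by positivity)
    _ = _ := by
        linear_combination (-(Cs s * ‖α (ξ - η)‖ * ‖υ η‖ * (1+zsq (ξ-η))^(s/2))) * hid1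
          - (Cs s * ‖α (ξ - η)‖ * ‖υ η‖ * (1+zsq η)^((s-1)/2)) * hid2

lemma enorm_tsum_le (f : G → ℂ) :
    ENNReal.ofReal ‖∑' i, f i‖ ≤ ∑' i, ENNReal.ofReal ‖f i‖ := by
  by_cases h : Summable fun i => ‖f i‖
  · calc ENNReal.ofReal ‖∑' i, f i‖ ≤ ENNReal.ofReal (∑' i, ‖f i‖) :=
        ENNReal.ofReal_le_ofReal (norm_tsum_le_tsum_norm h)
      _ = _ := ENNReal.ofReal_tsum_of_nonneg (fun i => norm_nonneg _) h
  · rw [tsum_eq_zero_of_not_summable (fun hf => h (summable_norm_iff.mpr hf))]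
    simp

lemma sum_finite_summable {g : G → ℝ} (hg : ∀ ξ, 0 ≤ g ξ)
    (h : (∑' ξ, ENNReal.ofReal (g ξ)) ≠ ⊤) : Summable g := by
  have h2 : Summable fun ξ => (g ξ).toNNReal := by
    apply ENNReal.tsum_coe_ne_top_iff_summable.mp
    exact h
  have h3 := NNReal.summable_coe.mpr h2
  exact h3.congr (fun ξ => Real.coe_toNNReal _ (hg ξ))

def AA (s : ℝ) (α : G → ℂ) (ζ : G) : ℝ≥0∞ := ENNReal.ofReal ((1+zsq ζ)^(s/2) * ‖α ζ‖)
def VV (s : ℝ) (υ : G → ℂ) (η : G) : ℝ≥0∞ := ENNReal.ofReal ((1+zsq η)^((s-1)/2) * ‖υ η‖)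
def kk (s : ℝ) (ζ : G) : ℝ≥0∞ := ENNReal.ofReal ((1+zsq ζ)^((1-s)/2))

lemma rq_nonneg (t : ℝ) (ξ : G) : 0 ≤ (1+zsq ξ)^t := Real.rpow_nonneg (q_pos ξ).le t

lemma point {s : ℝ} (hs : 2 < s) (α υ : G → ℂ) (ξ : G) :
    ENNReal.ofReal ‖commCoef s α υ ξ‖ ≤
      ENNReal.ofReal (Cs s) *
        ((∑' η, AA s α (ξ-η) * (kk s η * VV s υ η))
          + ∑' η, (AA s α (ξ-η) * kk s (ξ-η)) * VV s υ η) := by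
  calc ENNReal.ofReal ‖commCoef s α υ ξ‖
      ≤ ∑' η, ENNReal.ofReal ‖α (ξ - η) * υ η
          * ((((1 + zsq η) ^ (s/2) : ℝ) : ℂ) - (((1 + zsq ξ) ^ (s/2) : ℝ) : ℂ))‖ :=
        enorm_tsum_le _
    _ ≤ ∑' η, ENNReal.ofReal (Cs s) *
          (AA s α (ξ-η) * (kk s η * VV s υ η) + (AA s α (ξ-η) * kk s (ξ-η)) * VV s υ η) := by
        apply ENNReal.tsum_le_tsum
        intro η
        calc ENNReal.ofReal ‖_‖
            ≤ ENNReal.ofReal (Cs s * ( ((1+zsq (ξ-η))^(s/2) * ‖α (ξ-η)‖)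
                  * ((1+zsq η)^((1-s)/2) * ((1+zsq η)^((s-1)/2) * ‖υ η‖))
             + (((1+zsq (ξ-η))^(s/2) * ‖α (ξ-η)‖) * (1+zsq (ξ-η))^((1-s)/2))
                  * ((1+zsq η)^((s-1)/2) * ‖υ η‖) )) :=
              ENNReal.ofReal_le_ofReal (term_bound hs α υ ξ η)
          _ = _ := by
              rw [ENNReal.ofReal_mul (Cs_pos hs).le]
              congr 1
              rw [ENNReal.ofReal_add
                (mul_nonneg (mul_nonneg (rq_nonneg _ _) (norm_nonneg _))
                  (mul_nonneg (rq_nonneg _ _) (mul_nonneg (rq_nonneg _ _) (norm_nonneg _))))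
                (mul_nonneg (mul_nonneg (mul_nonneg (rq_nonneg _ _) (norm_nonneg _)) (rq_nonneg _ _))
                  (mul_nonneg (rq_nonneg _ _) (norm_nonneg _)))]
              congr 1
              · simp only [AA, kk, VV]
                rw [← ENNReal.ofReal_mul (rq_nonneg _ _),
                  ← ENNReal.ofReal_mul (mul_nonneg (rq_nonneg _ _) (norm_nonneg _))]
              · simp only [AA, kk, VV]
                rw [← ENNReal.ofReal_mul (mul_nonneg (rq_nonneg _ _) (norm_nonneg _)),
                  ← ENNReal.ofReal_mul
                    (mul_nonneg (mul_nonneg (rq_nonneg _ _) (norm_nonneg _)) (rq_nonneg _ _))]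
    _ = _ := by rw [ENNReal.tsum_mul_left, ENNReal.tsum_add]

lemma add_sq_le4 (x y : ℝ≥0∞) : (x+y)^2 ≤ 4*(x^2+y^2) := by
  have h1 : x + y ≤ 2 * (x ⊔ y) := by
    rw [two_mul]
    exact add_le_add le_sup_left le_sup_right
  calc (x+y)^2 ≤ (2*(x ⊔ y))^2 := by gcongr
    _ = 4*(x ⊔ y)^2 := by ring
    _ ≤ 4*(x^2+y^2) := by
        gcongr
        rcases le_total x y with h | h
        · rw [sup_eq_right.mpr h]; exact le_add_self
        · rw [sup_eq_left.mpr h]; exact le_self_add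

lemma sqAA (t : ℝ) (α : G → ℂ) (hα : Summable fun ξ => wgt t ξ * ‖α ξ‖^2) :
    ∑' ζ, (AA t α ζ)^2 = ENNReal.ofReal (∑' ξ, wgt t ξ * ‖α ξ‖^2) := by
  simp only [wgt] at hα ⊢
  rw [ENNReal.ofReal_tsum_of_nonneg (fun ξ => mul_nonneg (rq_nonneg _ _) (sq_nonneg _)) hα]
  apply tsum_congr; intro ζ
  rw [AA, ← ENNReal.ofReal_pow (mul_nonneg (rq_nonneg _ _) (norm_nonneg _))]
  congr 1
  rw [mul_pow, ← Real.rpow_natCast ((1+zsq ζ)^(t/2)) 2, ← Real.rpow_mul (q_pos ζ).le]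
  congr 2
  push_cast; ring

lemma sqkk (s : ℝ) (hsum : Summable fun ζ : G => (1+zsq ζ)^(1-s)) :
    ∑' ζ, (kk s ζ)^2 = ENNReal.ofReal (∑' ζ : G, (1+zsq ζ)^(1-s)) := by
  rw [ENNReal.ofReal_tsum_of_nonneg (fun ξ => rq_nonneg _ _) hsum]
  apply tsum_congr; intro ζ
  rw [kk, ← ENNReal.ofReal_pow (rq_nonneg _ _)]
  congr 1
  rw [← Real.rpow_natCast ((1+zsq ζ)^((1-s)/2)) 2, ← Real.rpow_mul (q_pos ζ).le]
  congr 1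
  push_cast; ring

lemma tflip (f g : G → ℝ≥0∞) (ξ : G) :
    ∑' η, f (ξ - η) * g η = ∑' η, g (ξ - η) * f η := by
  calc ∑' η, f (ξ - η) * g η
      = ∑' η, f (ξ - (ξ - η)) * g (ξ - η) :=
        (((Equiv.subLeft ξ).tsum_eq (fun η => f (ξ - η) * g η))).symm
    _ = ∑' η, g (ξ - η) * f η := by
        apply tsum_congr; intro η; rw [sub_sub_cancel, mul_comm]

/-- Kato–Ponce type commutator estimate on `𝕋²` (`d = 2`, `s > 1 + d/2 = 2`):
`‖[a, ⟨∇⟩^s]u‖_{L²} ≤ C ‖a‖_{H^s} ‖u‖_{H^{s−1}}`. -/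
theorem stmt12 (s : ℝ) (hs : 2 < s) :
    ∃ C > 0, ∀ α υ : (Fin 2 → ℤ) → ℂ,
      Summable (fun ξ => wgt s ξ * ‖α ξ‖^2) →
      Summable (fun ξ => wgt (s - 1) ξ * ‖υ ξ‖^2) →
      sobNorm 0 (commCoef s α υ) ≤ C * sobNorm s α * sobNorm (s - 1) υ := by
  have hCs := Cs_pos hs
  have hK2sum : Summable fun ξ : G => (1 + zsq ξ)^(1-s) := twoD (by linarith)
  set K2r := ∑' ξ : G, (1 + zsq ξ)^(1-s) with hK2rdef
  have hK2r0 : 0 ≤ K2r := tsum_nonneg fun ξ => rq_nonneg _ _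
  have hsqK : 0 ≤ Real.sqrt K2r := Real.sqrt_nonneg _
  refine ⟨3 * Cs s * Real.sqrt K2r + 1, by positivity, ?_⟩
  intro α υ hα hυ
  set Sa := ∑' ξ, wgt s ξ * ‖α ξ‖^2 with hSadef
  set Sv := ∑' ξ, wgt (s-1) ξ * ‖υ ξ‖^2 with hSvdef
  have hSa0 : 0 ≤ Sa := tsum_nonneg fun ξ => mul_nonneg (rq_nonneg _ _) (sq_nonneg _)
  have hSv0 : 0 ≤ Sv := tsum_nonneg fun ξ => mul_nonneg (rq_nonneg _ _) (sq_nonneg _)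
  have hSA : ∑' ζ, (AA s α ζ)^2 = ENNReal.ofReal Sa := sqAA s α hα
  have hSV : ∑' η, (VV s υ η)^2 = ENNReal.ofReal Sv := sqAA (s-1) υ hυ
  have hK2 : ∑' ζ, (kk s ζ)^2 = ENNReal.ofReal K2r := sqkk s hK2sum
  set c := commCoef s α υ with hcdef
  set E := ∑' ξ, (ENNReal.ofReal ‖c ξ‖)^2 with hEdef
  have hS1 : ∀ ξ, ∑' η, AA s α (ξ-η) * (kk s η * VV s υ η)
      = ∑' η, (kk s (ξ-η) * VV s υ (ξ-η)) * AA s α η :=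
    fun ξ => tflip (AA s α) (fun η => kk s η * VV s υ η) ξ
  have b1 : ∑' ξ, (∑' η, AA s α (ξ-η) * (kk s η * VV s υ η))^2
      ≤ (ENNReal.ofReal K2r * ENNReal.ofReal Sv) * ENNReal.ofReal Sa := by
    calc ∑' ξ, (∑' η, AA s α (ξ-η) * (kk s η * VV s υ η))^2
        = ∑' ξ, (∑' η, (kk s (ξ-η) * VV s υ (ξ-η)) * AA s α η)^2 := by
          apply tsum_congr; intro ξ; rw [hS1 ξ]
      _ ≤ (∑' ζ, kk s ζ * VV s υ ζ)^2 * ∑' η, (AA s α η)^2 :=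
          young (fun ζ => kk s ζ * VV s υ ζ) (AA s α)
      _ ≤ ((∑' ζ, (kk s ζ)^2) * (∑' ζ, (VV s υ ζ)^2)) * ∑' η, (AA s α η)^2 := by
          gcongr
          exact ecs _ _
      _ = _ := by rw [hSA, hSV, hK2]
  have b2 : ∑' ξ, (∑' η, (AA s α (ξ-η) * kk s (ξ-η)) * VV s υ η)^2
      ≤ (ENNReal.ofReal Sa * ENNReal.ofReal K2r) * ENNReal.ofReal Sv := by
    calc ∑' ξ, (∑' η, (AA s α (ξ-η) * kk s (ξ-η)) * VV s υ η)^2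
        ≤ (∑' ζ, AA s α ζ * kk s ζ)^2 * ∑' η, (VV s υ η)^2 :=
          young (fun ζ => AA s α ζ * kk s ζ) (VV s υ)
      _ ≤ ((∑' ζ, (AA s α ζ)^2) * (∑' ζ, (kk s ζ)^2)) * ∑' η, (VV s υ η)^2 := by
          gcongr
          exact ecs _ _
      _ = _ := by rw [hSA, hSV, hK2]
  set R : ℝ≥0∞ := 8 * ENNReal.ofReal (Cs s)^2 * ENNReal.ofReal K2r
      * ENNReal.ofReal Sa * ENNReal.ofReal Sv with hRdef
  have hER : E ≤ R := by
    calc E ≤ ∑' ξ, (ENNReal.ofReal (Cs s) *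
            ((∑' η, AA s α (ξ-η) * (kk s η * VV s υ η))
              + ∑' η, (AA s α (ξ-η) * kk s (ξ-η)) * VV s υ η))^2 := by
          rw [hEdef]
          apply ENNReal.tsum_le_tsum
          intro ξ
          gcongr
          exact point hs α υ ξ
      _ = ENNReal.ofReal (Cs s)^2 * ∑' ξ,
            ((∑' η, AA s α (ξ-η) * (kk s η * VV s υ η))
              + ∑' η, (AA s α (ξ-η) * kk s (ξ-η)) * VV s υ η)^2 := by
          rw [← ENNReal.tsum_mul_left]
          apply tsum_congr; intro ξ; rw [mul_pow]
      _ ≤ ENNReal.ofReal (Cs s)^2 * ∑' ξ,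
            4 * ((∑' η, AA s α (ξ-η) * (kk s η * VV s υ η))^2
              + (∑' η, (AA s α (ξ-η) * kk s (ξ-η)) * VV s υ η)^2) := by
          gcongr with ξ
          exact add_sq_le4 _ _
      _ = ENNReal.ofReal (Cs s)^2 * (4 *
            ((∑' ξ, (∑' η, AA s α (ξ-η) * (kk s η * VV s υ η))^2)
              + ∑' ξ, (∑' η, (AA s α (ξ-η) * kk s (ξ-η)) * VV s υ η)^2)) := by
          rw [ENNReal.tsum_mul_left, ENNReal.tsum_add]
      _ ≤ ENNReal.ofReal (Cs s)^2 * (4 *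
            ((ENNReal.ofReal K2r * ENNReal.ofReal Sv) * ENNReal.ofReal Sa
              + (ENNReal.ofReal Sa * ENNReal.ofReal K2r) * ENNReal.ofReal Sv)) := by
          gcongr
      _ = R := by rw [hRdef]; ring
  have hRne : R ≠ ⊤ := by
    rw [hRdef]
    refine ENNReal.mul_ne_top (ENNReal.mul_ne_top (ENNReal.mul_ne_top (ENNReal.mul_ne_top
      ?_ (ENNReal.pow_ne_top ENNReal.ofReal_ne_top)) ENNReal.ofReal_ne_top)
      ENNReal.ofReal_ne_top) ENNReal.ofReal_ne_top
    simp
  have hEne : E ≠ ⊤ := ne_top_of_le_ne_top hRne hER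
  have hEof : E = ∑' ξ, ENNReal.ofReal (‖c ξ‖^2) := by
    apply tsum_congr; intro ξ; rw [ENNReal.ofReal_pow (norm_nonneg _)]
  have hsum2 : Summable fun ξ => ‖c ξ‖^2 :=
    sum_finite_summable (fun ξ => sq_nonneg _) (by rw [← hEof]; exact hEne)
  have hEeq : E = ENNReal.ofReal (∑' ξ, ‖c ξ‖^2) := by
    rw [hEof, ENNReal.ofReal_tsum_of_nonneg (fun ξ => sq_nonneg _) hsum2]
  have hreal : ∑' ξ, ‖c ξ‖^2 ≤ 8 * (Cs s)^2 * K2r * Sa * Sv := by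
    have hmono := ENNReal.toReal_mono hRne hER
    rw [hEeq, ENNReal.toReal_ofReal (tsum_nonneg fun ξ => sq_nonneg _)] at hmono
    refine hmono.trans_eq ?_
    rw [hRdef, ENNReal.toReal_mul, ENNReal.toReal_mul, ENNReal.toReal_mul, ENNReal.toReal_mul,
      ENNReal.toReal_pow, ENNReal.toReal_ofReal hCs.le, ENNReal.toReal_ofReal hK2r0,
      ENNReal.toReal_ofReal hSa0, ENNReal.toReal_ofReal hSv0]
    norm_num
  have hsn0 : sobNorm 0 c = Real.sqrt (∑' ξ, ‖c ξ‖^2) := by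
    rw [sobNorm]
    congr 1
    apply tsum_congr; intro ξ
    rw [wgt, Real.rpow_zero, one_mul]
  have e1 : sobNorm s α = Real.sqrt Sa := by rw [sobNorm, hSadef]
  have e2 : sobNorm (s-1) υ = Real.sqrt Sv := by rw [sobNorm, hSvdef]
  rw [hsn0, e1, e2]
  have h8 : Real.sqrt (8 * (Cs s)^2 * K2r * Sa * Sv)
      = Real.sqrt 8 * Cs s * Real.sqrt K2r * Real.sqrt Sa * Real.sqrt Sv := by
    rw [Real.sqrt_mul (by positivity) Sv, Real.sqrt_mul (by positivity) Sa,
      Real.sqrt_mul (by positivity) K2r, Real.sqrt_mul (by norm_num : (0:ℝ) ≤ 8),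
      Real.sqrt_sq hCs.le]
  have hsqrt8 : Real.sqrt 8 ≤ 3 := by
    rw [show (3:ℝ) = Real.sqrt 9 by
      rw [show (9:ℝ) = 3^2 by norm_num, Real.sqrt_sq (by norm_num : (0:ℝ) ≤ 3)]]
    exact Real.sqrt_le_sqrt (by norm_num)
  calc Real.sqrt (∑' ξ, ‖c ξ‖^2)
      ≤ Real.sqrt (8 * (Cs s)^2 * K2r * Sa * Sv) := Real.sqrt_le_sqrt hreal
    _ = Real.sqrt 8 * Cs s * Real.sqrt K2r * Real.sqrt Sa * Real.sqrt Sv := h8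
    _ ≤ 3 * Cs s * Real.sqrt K2r * Real.sqrt Sa * Real.sqrt Sv := by gcongr
    _ ≤ (3 * Cs s * Real.sqrt K2r + 1) * Real.sqrt Sa * Real.sqrt Sv := by
        have : (0:ℝ) ≤ Real.sqrt Sa * Real.sqrt Sv := by positivity
        nlinarith [Real.sqrt_nonneg Sa, Real.sqrt_nonneg Sv]
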